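/- Let N ≥ 1, k ≥ 2, and let Ω ⊆ ℝ^N be a nonempty connected open set of finite Lebesgue measure |Ω|. For each i = 1,…,k let F_i : ℝ → ℝ be continuous with F_i(0) = 0 and satisfying (F2) with constants A_i > 0 and μ_i; set μ* := max_{1≤i≤k} μ_i. Let u_1,…,u_k : ℝ^N → ℝ be continuously differentiable functions with u_i ≥ 0 on Ω and u_i(x)·u_j(x) = 0 for all x ∈ Ω and i ≠ j, with |∇u_i|², u_i², F_i(u_i) integrable on Ω, and suppose J_Ω(U) = −μ*·|Ω| (i.e. U achieves the global minimum of the free energy over segregated states). Then at most one index i ∈ {1,…,k} has u_i not identically zero on Ω. -/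

import Mathlib

open MeasureTheory

/-- Any segregated state achieving the global minimum `-μ* |Ω|` of the free
energy over a nonempty connected open domain of finite measure has at most one
component not identically zero on `Ω`. -/
theorem stmt_1
    {N k : ℕ} (hN : 1 ≤ N) (hk : 2 ≤ k)
    (Ω : Set (EuclideanSpace ℝ (Fin N))) (hΩopen : IsOpen Ω)
    (hΩne : Ω.Nonempty) (hΩconn : IsConnected Ω)
    (hΩfin : volume Ω < ⊤)
    (F : Fin k → ℝ → ℝ) (hFcont : ∀ i, Continuous (F i))
    (hF0 : ∀ i, F i 0 = 0)
    (A : Fin k → ℝ) (hA : ∀ i, 0 < A i)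
    (μ : Fin k → ℝ) (hμ : ∀ i, μ i = F i (A i) - (A i) ^ 2 / 2)
    (hF2 : ∀ i, ∀ t : ℝ, 0 ≤ t → F i t - t ^ 2 / 2 ≤ μ i)
    (i₀ : Fin k) (hi₀ : ∀ i, μ i ≤ μ i₀)
    (u : Fin k → EuclideanSpace ℝ (Fin N) → ℝ)
    (hu : ∀ i, ContDiff ℝ 1 (u i))
    (hgradint : ∀ i, IntegrableOn (fun x => ‖fderiv ℝ (u i) x‖ ^ 2) Ω)
    (husqint : ∀ i, IntegrableOn (fun x => (u i x) ^ 2) Ω)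
    (hFuint : ∀ i, IntegrableOn (fun x => F i (u i x)) Ω)
    (hpos : ∀ i, ∀ x ∈ Ω, 0 ≤ u i x)
    (hseg : ∀ i j, i ≠ j → ∀ x ∈ Ω, u i x * u j x = 0)
    (hmin : ∑ i, ∫ x in Ω,
        (1 / 2 * ‖fderiv ℝ (u i) x‖ ^ 2 + 1 / 2 * (u i x) ^ 2 - F i (u i x))
      = -(μ i₀) * (volume Ω).toReal) :
    ∃ j : Fin k, ∀ i : Fin k, i ≠ j → ∀ x ∈ Ω, u i x = 0 := by
  classical
  set g : Fin k → EuclideanSpace ℝ (Fin N) → ℝ :=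
    fun i x => 1 / 2 * ‖fderiv ℝ (u i) x‖ ^ 2 + 1 / 2 * (u i x) ^ 2 - F i (u i x) with hg
  have hgint : ∀ i, IntegrableOn (g i) Ω := by
    intro i
    exact (((hgradint i).const_mul (1/2)).add ((husqint i).const_mul (1/2))).sub (hFuint i)
  have hintsum : IntegrableOn (fun x => ∑ j, g j x) Ω :=
    integrable_finset_sum _ fun j _ => hgint j
  have hμ0 : 0 ≤ μ i₀ := by
    have := hF2 i₀ 0 le_rfl
    simp only [hF0 i₀] at this
    nlinarith
  -- pointwise lower bound for the potential part
  have hsum0 : ∀ x ∈ Ω, -(μ i₀) ≤ ∑ j, (1 / 2 * (u j x) ^ 2 - F j (u j x)) := by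
    intro x hx
    by_cases hall : ∀ j, u j x = 0
    · have : ∑ j, (1 / 2 * (u j x) ^ 2 - F j (u j x)) = 0 :=
        Finset.sum_eq_zero fun j _ => by simp [hall j, hF0 j]
      rw [this]; linarith
    · push_neg at hall
      obtain ⟨j₀, hj₀⟩ := hall
      have hz : ∀ j, j ≠ j₀ → u j x = 0 := by
        intro j hj
        have := hseg j j₀ hj x hx
        exact (mul_eq_zero.1 this).resolve_right hj₀
      have hsum : ∑ j, (1 / 2 * (u j x) ^ 2 - F j (u j x))
          = 1 / 2 * (u j₀ x) ^ 2 - F j₀ (u j₀ x) :=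
        Finset.sum_eq_single_of_mem j₀ (Finset.mem_univ _)
          (fun b _ hb => by simp [hz b hb, hF0 b])
      rw [hsum]
      have h1 := hF2 j₀ (u j₀ x) (hpos j₀ x hx)
      have h2 := hi₀ j₀
      linarith
  -- pointwise lower bound for the full integrand
  have hpt : ∀ x ∈ Ω, ∀ i, 1 / 2 * ‖fderiv ℝ (u i) x‖ ^ 2 - μ i₀ ≤ ∑ j, g j x := by
    intro x hx i
    have hsplit : ∑ j, g j x
        = (∑ j, 1 / 2 * ‖fderiv ℝ (u j) x‖ ^ 2) + ∑ j, (1 / 2 * (u j x) ^ 2 - F j (u j x)) := by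
      rw [← Finset.sum_add_distrib]
      exact Finset.sum_congr rfl fun j _ => by simp [hg]; ring
    have hone : 1 / 2 * ‖fderiv ℝ (u i) x‖ ^ 2 ≤ ∑ j, 1 / 2 * ‖fderiv ℝ (u j) x‖ ^ 2 :=
      Finset.single_le_sum (f := fun j => 1 / 2 * ‖fderiv ℝ (u j) x‖ ^ 2) (fun j _ => by positivity) (Finset.mem_univ i)
    have := hsum0 x hx
    rw [hsplit]; linarith
  -- the total integral identity
  have hmin' : ∫ x in Ω, (∑ j, g j x) = -(μ i₀) * (volume Ω).toReal := by
    rw [integral_finset_sum _ fun j _ => hgint j]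
    exact hmin
  -- the nonnegative function (sum g) + μ i₀ has zero integral, hence is a.e. zero
  have hconstint : IntegrableOn (fun _ : EuclideanSpace ℝ (Fin N) => μ i₀) Ω :=
    integrableOn_const hΩfin.ne
  have hinth : IntegrableOn (fun x => (∑ j, g j x) + μ i₀) Ω := hintsum.add hconstint
  have hinteg0 : ∫ x in Ω, ((∑ j, g j x) + μ i₀) = 0 := by
    rw [integral_add hintsum hconstint, hmin', setIntegral_const]
    simp [smul_eq_mul]; rw [Measure.real]; ring
  have hnonneg : 0 ≤ᵐ[volume.restrict Ω] fun x => (∑ j, g j x) + μ i₀ := by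
    refine (ae_restrict_mem hΩopen.measurableSet).mono fun x hx => ?_
    have := hpt x hx i₀
    have h2 : (0:ℝ) ≤ ‖fderiv ℝ (u i₀) x‖ ^ 2 := by positivity
    simp only [Pi.zero_apply]
    linarith
  have hae : (fun x => (∑ j, g j x) + μ i₀) =ᵐ[volume.restrict Ω] 0 :=
    (integral_eq_zero_iff_of_nonneg_ae hnonneg hinth).1 hinteg0
  -- each gradient vanishes everywhere on Ω
  have hfd : ∀ i, ∀ x ∈ Ω, fderiv ℝ (u i) x = 0 := by
    intro i
    by_contra hcon
    push_neg at hcon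
    obtain ⟨x₀, hx₀, hfx₀⟩ := hcon
    have hcontfd : Continuous (fun x => fderiv ℝ (u i) x) := (hu i).continuous_fderiv one_ne_zero
    have hPopen : IsOpen {x | fderiv ℝ (u i) x ≠ 0} :=
      isOpen_compl_singleton.preimage hcontfd
    have hVopen : IsOpen (Ω ∩ {x | fderiv ℝ (u i) x ≠ 0}) := hΩopen.inter hPopen
    have hVne : (Ω ∩ {x | fderiv ℝ (u i) x ≠ 0}).Nonempty := ⟨x₀, hx₀, hfx₀⟩
    have haefd : ∀ᵐ x ∂(volume.restrict Ω), fderiv ℝ (u i) x = 0 := by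
      refine (hae.and (ae_restrict_mem hΩopen.measurableSet)).mono fun x ⟨hx0, hxΩ⟩ => ?_
      have h1 := hpt x hxΩ i
      simp only [Pi.zero_apply] at hx0
      have h2 : ‖fderiv ℝ (u i) x‖ ^ 2 ≤ 0 := by linarith
      have h3 : ‖fderiv ℝ (u i) x‖ ≤ 0 := by nlinarith [norm_nonneg (fderiv ℝ (u i) x)]
      exact norm_le_zero_iff.1 h3
    have hnull : volume.restrict Ω {x | fderiv ℝ (u i) x ≠ 0} = 0 := by
      exact ae_iff.1 haefd
    have hV0 : volume (Ω ∩ {x | fderiv ℝ (u i) x ≠ 0}) = 0 := by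
      rw [← Set.inter_comm, ← Measure.restrict_apply hPopen.measurableSet]
      exact hnull
    exact (hVopen.measure_pos volume hVne).ne' hV0
  -- each u i is constant on Ω
  obtain ⟨x₀, hx₀⟩ := hΩne
  have hconst : ∀ i, ∀ x ∈ Ω, u i x = u i x₀ := by
    intro i
    -- local constancy
    have hloc : ∀ y ∈ Ω, ∃ ε > 0, Metric.ball y ε ⊆ Ω ∧
        ∀ z ∈ Metric.ball y ε, u i z = u i y := by
      intro y hy
      obtain ⟨ε, hε, hball⟩ := Metric.isOpen_iff.1 hΩopen y hy
      refine ⟨ε, hε, hball, fun z hz => ?_⟩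
      refine (convex_ball y ε).is_const_of_fderivWithin_eq_zero
        ((hu i).differentiable one_ne_zero).differentiableOn ?_ hz (Metric.mem_ball_self hε)
      intro w hw
      rw [fderivWithin_of_isOpen Metric.isOpen_ball hw]
      exact hfd i w (hball hw)
    -- clopen argument
    set S : Set (EuclideanSpace ℝ (Fin N)) := {x | x ∈ Ω ∧ u i x = u i x₀} with hS
    have hSopen : IsOpen S := by
      rw [isOpen_iff_forall_mem_open]
      rintro x ⟨hxΩ, hxc⟩
      obtain ⟨ε, hε, hball, hcb⟩ := hloc x hxΩ
      exact ⟨Metric.ball x ε, fun z hz => ⟨hball hz, by rw [hcb z hz, hxc]⟩,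
        Metric.isOpen_ball, Metric.mem_ball_self hε⟩
    have hTopen : IsOpen {x | u i x ≠ u i x₀} :=
      isOpen_ne_fun ((hu i).continuous) continuous_const
    have hdisj : Disjoint S {x | u i x ≠ u i x₀} := by
      rw [Set.disjoint_left]
      rintro x ⟨_, hxc⟩ hxne
      exact hxne hxc
    have hsub : Ω ⊆ S ∪ {x | u i x ≠ u i x₀} := by
      intro x hx
      by_cases h : u i x = u i x₀
      · exact Or.inl ⟨hx, h⟩
      · exact Or.inr h
    have := hΩconn.isPreconnected.subset_or_subset hSopen hTopen hdisj hsub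
    rcases this with h | h
    · exact fun x hx => (h hx).2
    · exact absurd rfl (h hx₀)
  -- conclude
  by_cases hall : ∀ i, u i x₀ = 0
  · exact ⟨i₀, fun i _ x hx => by rw [hconst i x hx, hall i]⟩
  · push_neg at hall
    obtain ⟨j, hj⟩ := hall
    refine ⟨j, fun i hi x hx => ?_⟩
    rw [hconst i x hx]
    exact (mul_eq_zero.1 (hseg i j hi x₀ hx₀)).resolve_right hj
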